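/- Let M = c · ββ^T where c ≠ 0 and β ∈ ℝ^q is a unit vector, and let M̂ be a symmetric matrix with ‖M̂ − M‖_op ≤ ε < |c|/2. Let v̂ be a unit-norm leading eigenvector of M̂ (eigenvector associated to the eigenvalue of largest absolute value). Then min(‖v̂ − β‖₂, ‖v̂ + β‖₂) ≤ 2√2 · ε / |c|. -/

import Mathlib

open Matrix RealInnerProductSpace

/-- Euclidean norm on `Fin q → ℝ`. -/
noncomputable def enorm' {q : ℕ} (v : Fin q → ℝ) : ℝ := Real.sqrt (∑ i, v i ^ 2)

/-- Spectral (operator) norm of a real square matrix. -/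
noncomputable def opNorm' {q : ℕ} (A : Matrix (Fin q) (Fin q) ℝ) : ℝ :=
  ‖Matrix.toEuclideanCLM (𝕜 := ℝ) A‖

noncomputable def toE {q : ℕ} (v : Fin q → ℝ) : EuclideanSpace ℝ (Fin q) :=
  (WithLp.equiv 2 (Fin q → ℝ)).symm v

variable {q : ℕ}

lemma toE_norm (v : Fin q → ℝ) : ‖toE v‖ = enorm' v := by
  rw [EuclideanSpace.norm_eq, enorm']
  simp [toE, sq_abs]

lemma toE_inner (u v : Fin q → ℝ) : ⟪toE u, toE v⟫ = ∑ i, u i * v i := by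
  rw [toE, toE, WithLp.equiv_symm_apply, EuclideanSpace.inner_toLp_toLp]
  simp [dotProduct, mul_comm]

lemma toE_sub (u v : Fin q → ℝ) : toE (u - v) = toE u - toE v := rfl
lemma toE_add (u v : Fin q → ℝ) : toE (u + v) = toE u + toE v := rfl
lemma toE_smul (a : ℝ) (v : Fin q → ℝ) : toE (a • v) = a • toE v := rfl

lemma toE_clm (A : Matrix (Fin q) (Fin q) ℝ) (x : Fin q → ℝ) :
    Matrix.toEuclideanCLM (𝕜 := ℝ) A (toE x) = toE (A.mulVec x) := rfl

lemma spectral_bound (A : Matrix (Fin q) (Fin q) ℝ) (hsym : A.IsSymm) (lam : ℝ)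
    (hlead : ∀ (lam' : ℝ) (w : Fin q → ℝ), w ≠ 0 → A.mulVec w = lam' • w → |lam'| ≤ |lam|)
    (x : Fin q → ℝ) : ‖toE (A.mulVec x)‖ ≤ |lam| * ‖toE x‖ := by
  have hH : A.IsHermitian := by
    rwa [Matrix.IsHermitian, Matrix.conjTranspose_eq_transpose_of_trivial]
  set b := hH.eigenvectorBasis with hb
  set μ := hH.eigenvalues with hμdef
  have hμ : ∀ i, |μ i| ≤ |lam| := by
    intro i
    refine hlead (μ i) (WithLp.equiv 2 _ (b i)) ?_ (hH.mulVec_eigenvectorBasis i)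
    intro h0
    have h1 : ‖b i‖ = 1 := b.orthonormal.1 i
    have h2 : b i = 0 := by
      have := congrArg (WithLp.equiv 2 (Fin q → ℝ)).symm h0
      simpa using this
    rw [h2] at h1; simp at h1
  have hself : ∀ i, b.repr (toE (A.mulVec x)) i = μ i * b.repr (toE x) i := by
    intro i
    rw [b.repr_apply_apply, b.repr_apply_apply]
    have hbi : b i = toE (WithLp.equiv 2 (Fin q → ℝ) (b i)) := rfl
    set u := WithLp.equiv 2 (Fin q → ℝ) (b i) with hu
    have hAu : A.mulVec u = μ i • u := hH.mulVec_eigenvectorBasis i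
    calc ⟪b i, toE (A.mulVec x)⟫ = ∑ j, u j * (A.mulVec x) j := by
          rw [hbi, toE_inner]
      _ = dotProduct u (A.mulVec x) := rfl
      _ = dotProduct (A.mulVec u) x := by
          rw [dotProduct_mulVec, ← Matrix.mulVec_transpose, hsym.eq]
      _ = μ i * dotProduct u x := by rw [hAu, smul_dotProduct]; rfl
      _ = μ i * ⟪b i, toE x⟫ := by rw [hbi, toE_inner]; rfl
  rw [← b.repr.norm_map (toE (A.mulVec x)), ← b.repr.norm_map (toE x)]
  rw [EuclideanSpace.norm_eq, EuclideanSpace.norm_eq]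
  rw [← Real.sqrt_sq (abs_nonneg lam), ← Real.sqrt_mul (sq_nonneg _)]
  apply Real.sqrt_le_sqrt
  rw [Finset.mul_sum]
  apply Finset.sum_le_sum
  intro i _
  rw [hself i, Real.norm_eq_abs, Real.norm_eq_abs, abs_mul, mul_pow]
  exact mul_le_mul_of_nonneg_right (pow_le_pow_left₀ (abs_nonneg _) (hμ i) 2) (sq_nonneg _)

set_option maxHeartbeats 1000000 in
/-- **Davis–Kahan-type perturbation bound for rank-one matrices.**
Let `M = c·ββᵀ` with `c ≠ 0` and `β` a unit vector, and let `M̂` be symmetric with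
`‖M̂ − M‖_op ≤ ε < |c|/2`. If `v̂` is a unit leading eigenvector of `M̂`
(eigenvector for the eigenvalue of largest absolute value), then
`min(‖v̂ − β‖, ‖v̂ + β‖) ≤ 2√2·ε/|c|`. -/
theorem rank_one_davis_kahan
    {q : ℕ} (c : ℝ) (hc : c ≠ 0) (β : Fin q → ℝ) (hβ : enorm' β = 1)
    (M Mhat : Matrix (Fin q) (Fin q) ℝ)
    (hM : M = c • vecMulVec β β)
    (hsym : Mhat.IsSymm)
    (ε : ℝ) (hε : opNorm' (Mhat - M) ≤ ε) (hεc : ε < |c| / 2)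
    (vhat : Fin q → ℝ) (hvhat : enorm' vhat = 1)
    (lam : ℝ)
    (heig : Mhat.mulVec vhat = lam • vhat)
    (hlead : ∀ (lam' : ℝ) (w : Fin q → ℝ), w ≠ 0 →
      Mhat.mulVec w = lam' • w → |lam'| ≤ |lam|) :
    min (enorm' (vhat - β)) (enorm' (vhat + β)) ≤ 2 * Real.sqrt 2 * ε / |c| := by
  classical
  have hε0 : 0 ≤ ε := le_trans (norm_nonneg _) hε
  have hc0 : 0 < |c| := abs_pos.2 hc
  have hnβ : ‖toE β‖ = 1 := by rw [toE_norm, hβ]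
  have hnv : ‖toE vhat‖ = 1 := by rw [toE_norm, hvhat]
  have hββ : ∑ i, β i * β i = 1 := by
    have h0 : (0:ℝ) ≤ ∑ i, β i * β i := Finset.sum_nonneg fun i _ => mul_self_nonneg _
    have h1 : Real.sqrt (∑ i, β i * β i) = 1 := by
      rw [← hβ, enorm']; congr 1; exact Finset.sum_congr rfl fun i _ => (sq (β i)).symm ▸ by ring
    nlinarith [Real.sq_sqrt h0]
  have hMx : ∀ x : Fin q → ℝ, M.mulVec x = (c * ∑ i, β i * x i) • β := by
    intro x; rw [hM]; funext j
    simp only [Matrix.mulVec, dotProduct, Matrix.smul_apply, Matrix.vecMulVec_apply,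
      Pi.smul_apply, smul_eq_mul, Finset.mul_sum, Finset.sum_mul]
    exact Finset.sum_congr rfl fun i _ => by ring
  have hMβ : M.mulVec β = c • β := by rw [hMx, hββ, mul_one]
  have hpert : ∀ x : Fin q → ℝ, ‖toE (Mhat.mulVec x - M.mulVec x)‖ ≤ ε * ‖toE x‖ := by
    intro x
    have h1 := (Matrix.toEuclideanCLM (𝕜 := ℝ) (Mhat - M)).le_opNorm (toE x)
    rw [toE_clm, Matrix.sub_mulVec] at h1
    exact le_trans h1 (mul_le_mul_of_nonneg_right hε (norm_nonneg _))
  have hspec := spectral_bound Mhat hsym lam hlead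
  have hlam : |c| - ε ≤ |lam| := by
    have h1 := hpert β
    rw [hMβ, hnβ, mul_one] at h1
    have h2 : ‖toE (c • β)‖ - ‖toE (Mhat.mulVec β)‖ ≤ ‖toE (Mhat.mulVec β) - toE (c • β)‖ := by
      rw [norm_sub_rev]; exact norm_sub_norm_le _ _
    rw [← toE_sub] at h2
    have h3 : ‖toE (c • β)‖ = |c| := by
      rw [toE_smul, norm_smul, hnβ, Real.norm_eq_abs, mul_one]
    have h4 := hspec β
    rw [hnβ, mul_one] at h4
    linarith
  have hlampos : 0 < |lam| := by linarith
  set t : ℝ := ∑ i, vhat i * β i with htdef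
  have ht1 : |t| ≤ 1 := by
    have h := abs_real_inner_le_norm (toE vhat) (toE β)
    rw [toE_inner, hnβ, hnv] at h
    simpa using h
  set u := toE vhat with hudef
  set w := toE β with hwdef
  have hiuw : ⟪u, w⟫ = t := toE_inner _ _
  have hiww : ⟪w, w⟫ = 1 := by rw [hwdef, toE_inner, hββ]
  have ht' : (∑ i, β i * vhat i) = t := by
    rw [htdef]; exact Finset.sum_congr rfl fun i _ => mul_comm _ _
  have hr : ‖lam • u - (c * t) • w‖ ≤ ε := by
    have h1 := hpert vhat
    rw [heig, hMx vhat, ht', hnv, mul_one, toE_sub, toE_smul, toE_smul] at h1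
    exact h1
  have key : lam ^ 2 * (1 - t ^ 2) ≤ ε ^ 2 := by
    set s : ℝ := lam * t - c * t with hsdef
    have hrw : ⟪lam • u - (c * t) • w, w⟫ = s := by
      rw [inner_sub_left, real_inner_smul_left, real_inner_smul_left, hiuw, hiww, hsdef]
      ring
    have hv : lam • u - (lam * t) • w = (lam • u - (c * t) • w) - s • w := by
      rw [hsdef]; module
    have h1 : ‖(lam • u - (c * t) • w) - s • w‖ ^ 2
        = ‖lam • u - (c * t) • w‖ ^ 2 - s ^ 2 := by
      rw [norm_sub_sq_real, real_inner_smul_right, hrw, norm_smul, Real.norm_eq_abs,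
        mul_pow, sq_abs, hnβ]
      ring
    have h2 : ‖lam • u - (lam * t) • w‖ ^ 2 = lam ^ 2 * (1 - t ^ 2) := by
      rw [norm_sub_sq_real, real_inner_smul_left, real_inner_smul_right, hiuw,
        norm_smul, norm_smul, hnv, hnβ, Real.norm_eq_abs, Real.norm_eq_abs,
        mul_one, mul_one, abs_mul, mul_pow, sq_abs, sq_abs]
      ring
    rw [hv, h1] at h2
    nlinarith [norm_nonneg (lam • u - (c * t) • w), sq_nonneg s]
  have h1t0 : (0:ℝ) ≤ 1 - t ^ 2 := by
    nlinarith [sq_abs t, mul_le_mul ht1 ht1 (abs_nonneg t) zero_le_one]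
  have hc2 : (0:ℝ) < c ^ 2 := by positivity
  have hl2 : c ^ 2 / 4 ≤ lam ^ 2 := by
    have h5 : |c| / 2 ≤ |lam| := by linarith
    have h6 : (0:ℝ) ≤ |c| / 2 := by positivity
    have h7 := pow_le_pow_left₀ h6 h5 2
    rw [div_pow, sq_abs, sq_abs] at h7
    norm_num at h7
    linarith
  have hq : (1 - t ^ 2) * c ^ 2 ≤ 4 * ε ^ 2 := by
    nlinarith [mul_le_mul_of_nonneg_right hl2 h1t0]
  have hb0 : (0:ℝ) ≤ 2 * Real.sqrt 2 * ε / |c| := by positivity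
  have hsq : (2 * Real.sqrt 2 * ε / |c|) ^ 2 = 8 * ε ^ 2 / c ^ 2 := by
    rw [div_pow, mul_pow, mul_pow, Real.sq_sqrt (by norm_num : (0:ℝ) ≤ 2), sq_abs]
    ring
  rcases le_or_gt 0 t with hts | hts
  · refine le_trans (min_le_left _ _) ?_
    have hnn : 0 ≤ enorm' (vhat - β) := Real.sqrt_nonneg _
    have hsq2 : enorm' (vhat - β) ^ 2 = 2 - 2 * t := by
      rw [← toE_norm, toE_sub, ← hudef, ← hwdef, norm_sub_sq_real, hiuw, hnv, hnβ]
      ring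
    have hle : enorm' (vhat - β) ^ 2 ≤ (2 * Real.sqrt 2 * ε / |c|) ^ 2 := by
      rw [hsq2, hsq]
      have h7 : t ≤ 1 := le_trans (le_abs_self t) ht1
      have ht2 : t ^ 2 ≤ t := by nlinarith
      rw [le_div_iff₀ hc2]
      nlinarith [mul_nonneg (by linarith : (0:ℝ) ≤ t - t ^ 2) (le_of_lt hc2)]
    calc enorm' (vhat - β) = Real.sqrt (enorm' (vhat - β) ^ 2) := (Real.sqrt_sq hnn).symm
      _ ≤ Real.sqrt ((2 * Real.sqrt 2 * ε / |c|) ^ 2) := Real.sqrt_le_sqrt hle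
      _ = 2 * Real.sqrt 2 * ε / |c| := Real.sqrt_sq hb0
  · refine le_trans (min_le_right _ _) ?_
    have hnn : 0 ≤ enorm' (vhat + β) := Real.sqrt_nonneg _
    have hsq2 : enorm' (vhat + β) ^ 2 = 2 + 2 * t := by
      rw [← toE_norm, toE_add, ← hudef, ← hwdef, norm_add_sq_real, hiuw, hnv, hnβ]
      ring
    have hle : enorm' (vhat + β) ^ 2 ≤ (2 * Real.sqrt 2 * ε / |c|) ^ 2 := by
      rw [hsq2, hsq]
      have h7 : -t ≤ 1 := le_trans (neg_le_abs t) ht1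
      have ht2 : t ^ 2 ≤ -t := by nlinarith
      rw [le_div_iff₀ hc2]
      nlinarith [mul_nonneg (by linarith : (0:ℝ) ≤ -t - t ^ 2) (le_of_lt hc2)]
    calc enorm' (vhat + β) = Real.sqrt (enorm' (vhat + β) ^ 2) := (Real.sqrt_sq hnn).symm
      _ ≤ Real.sqrt ((2 * Real.sqrt 2 * ε / |c|) ^ 2) := Real.sqrt_le_sqrt hle
      _ = 2 * Real.sqrt 2 * ε / |c| := Real.sqrt_sq hb0
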